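/- e_max = max( max_{1≤i≤m} min(p^X_i, p^Y_i), max_{(i,j)∈S} e(i,j) ), where S is the set of pairs (i,j) with p^X_i < p^X_j, p^Y_i > p^Y_j, p^X_i < p^Y_i and p^Y_j < p^X_j, and e(i,j) = (p^X_i p^Y_i (p^X_j − p^Y_j) + p^X_j p^Y_j (p^Y_i − p^X_i)) / (p^Y_i p^X_j − p^X_i p^Y_j); when S is empty, e_max = max_{1≤i≤m} min(p^X_i, p^Y_i). -/

import Mathlib

open MeasureTheory ProbabilityTheory Filter Finset Topology

noncomputable section

attribute [local instance] Classical.propDecidable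

/-- The simplex `Λ` of probability vectors on `{1,…,m}`. -/
def Lam (m : ℕ) : Set (Fin m → ℝ) := {l | (∀ i, 0 ≤ l i) ∧ ∑ i, l i = 1}

/-- `f(λ^X, λ^Y) = Σ_i min (p^X_i λ^X_i) (p^Y_i λ^Y_i)`. -/
def fobj {m : ℕ} (pX pY : Fin m → ℝ) (l : (Fin m → ℝ) × (Fin m → ℝ)) : ℝ :=
  ∑ i, min (pX i * l.1 i) (pY i * l.2 i)

/-- `e_max`, the maximum of `f` over `Λ²`. -/
def emax {m : ℕ} (pX pY : Fin m → ℝ) : ℝ :=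
  sSup (fobj pX pY '' (Lam m ×ˢ Lam m))

/-- The set `U`. -/
def Uset {m : ℕ} (pX pY : Fin m → ℝ) : Set (Fin m → ℝ) :=
  {u | (∀ i, 0 ≤ u i) ∧ (∑ i, u i / pX i) ≤ 1 ∧ (∑ i, u i / pY i) ≤ 1}

/-- The set `L_U` of maximizers of `φ(u) = Σ_i u_i` over `U`. -/
def LU {m : ℕ} (pX pY : Fin m → ℝ) : Set (Fin m → ℝ) :=
  {u ∈ Uset pX pY | ∑ i, u i = emax pX pY}

/-- The set `I` of letters usable in a maximizer. -/
def Iset {m : ℕ} (pX pY : Fin m → ℝ) : Set (Fin m) :=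
  {i | ∃ u ∈ LU pX pY, 0 < u i}

/-- Case a): some maximizer saturates the `X` constraint but not the `Y` one. -/
def CaseA {m : ℕ} (pX pY : Fin m → ℝ) : Prop :=
  ∃ u ∈ LU pX pY, (∑ i, u i / pX i) = 1 ∧ (∑ i, u i / pY i) < 1

/-- Case b): every maximizer saturates both constraints. -/
def CaseB {m : ℕ} (pX pY : Fin m → ℝ) : Prop :=
  ∀ u ∈ LU pX pY, (∑ i, u i / pX i) = 1 ∧ (∑ i, u i / pY i) = 1

/-- Case b1): Case b) and the vectors `(1/p^X_i)_{i∈I}` and `(1/p^Y_i)_{i∈I}` coincide. -/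
def CaseB1 {m : ℕ} (pX pY : Fin m → ℝ) : Prop :=
  CaseB pX pY ∧ ∀ i ∈ Iset pX pY, (pX i)⁻¹ = (pY i)⁻¹

/-- Case b2): Case b) and the vectors `(1/p^X_i)_{i∈I}` and `(1/p^Y_i)_{i∈I}` differ. -/
def CaseB2 {m : ℕ} (pX pY : Fin m → ℝ) : Prop :=
  CaseB pX pY ∧ ¬ (∀ i ∈ Iset pX pY, (pX i)⁻¹ = (pY i)⁻¹)

/-- The set `K_{Λ²}` of maximizers of `f` over `Λ²`. -/
def Kset {m : ℕ} (pX pY : Fin m → ℝ) : Set ((Fin m → ℝ) × (Fin m → ℝ)) :=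
  {l ∈ Lam m ×ˢ Lam m | fobj pX pY l = emax pX pY}

/-- `p^X_max`. -/
def pXmax {m : ℕ} (pX : Fin m → ℝ) : ℝ := ⨆ i, pX i

/-- The set `J` (Case a)). -/
def Jset {m : ℕ} (pX pY : Fin m → ℝ) : Set (Fin m → ℝ) :=
  {l ∈ Lam m | (∀ i ∉ Iset pX pY, l i = 0) ∧
    (∑ i ∈ Finset.univ.filter (· ∈ Iset pX pY), l i / pY i) ≤ 1 / pXmax pX}

/-- `E = {x : Σ_i x_i = 0}`. -/
def Eset (m : ℕ) : Set (Fin m → ℝ) := {x | ∑ i, x i = 0}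

/-- `E' = {x ∈ E : x_i ≥ 0 for i ∉ I}`. -/
def E'set {m : ℕ} (pX pY : Fin m → ℝ) : Set (Fin m → ℝ) :=
  {x ∈ Eset m | ∀ i ∉ Iset pX pY, 0 ≤ x i}

/-- The function `𝔪` of Lemma 1.4. -/
def mfrak {m : ℕ} (pX pY : Fin m → ℝ) (ν : (Fin m → ℝ) × (Fin m → ℝ)) : ℝ :=
  sSup ((fun x : (Fin m → ℝ) × (Fin m → ℝ) =>
      ∑ i, min (pX i * x.1 i + ν.1 i) (pY i * x.2 i + ν.2 i)) ''
    (E'set pX pY ×ˢ E'set pX pY))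

/-- Partial sum `λ_1 + … + λ_i`. -/
def psumLe {m : ℕ} (l : Fin m → ℝ) (i : Fin m) : ℝ :=
  ∑ j ∈ Finset.univ.filter (· ≤ i), l j

/-- Partial sum `λ_1 + … + λ_{i-1}`. -/
def psumLt {m : ℕ} (l : Fin m → ℝ) (i : Fin m) : ℝ :=
  ∑ j ∈ Finset.univ.filter (· < i), l j

/-- `e(i,j)`. -/
def eij {m : ℕ} (pX pY : Fin m → ℝ) (i j : Fin m) : ℝ :=
  (pX i * pY i * (pX j - pY j) + pX j * pY j * (pY i - pX i)) /
    (pY i * pX j - pX i * pY j)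

/-- The set `S` of admissible pairs `(i,j)` in the representation of `e_max`. -/
def Sset {m : ℕ} (pX pY : Fin m → ℝ) : Set (Fin m × Fin m) :=
  {ij | pX ij.1 < pX ij.2 ∧ pY ij.2 < pY ij.1 ∧ pX ij.1 < pY ij.1 ∧ pY ij.2 < pX ij.2}

/-- `e_1 = max_i min(p^X_i, p^Y_i)`. -/
def e1 {m : ℕ} (pX pY : Fin m → ℝ) : ℝ := ⨆ i, min (pX i) (pY i)

/-- `e_2 = max_{(i,j)∈S} e(i,j)` (with `sSup ∅ = 0` when `S` is empty). -/
def e2 {m : ℕ} (pX pY : Fin m → ℝ) : ℝ :=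
  sSup ((fun ij : Fin m × Fin m => eij pX pY ij.1 ij.2) '' Sset pX pY)


/-! ### Auxiliary lemmas -/

section Auxiliary

variable {m : ℕ} {pX pY : Fin m → ℝ}

lemma D_pos (hpX : ∀ i, 0 < pX i) (hpY : ∀ i, 0 < pY i) {i j : Fin m}
    (hi : pX i < pY i) (hj : pY j < pX j) :
    0 < pY i * pX j - pX i * pY j := by
  nlinarith [hpX i, hpY j, hpX j, hpY i]

lemma eij_le_pXi (hpX : ∀ i, 0 < pX i) (hpY : ∀ i, 0 < pY i) {i j : Fin m}
    (hi : pX i < pY i) (hj : pY j < pX j) (h : pX j ≤ pX i) :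
    eij pX pY i j ≤ pX i := by
  have hD := D_pos hpX hpY hi hj
  rw [eij, div_le_iff₀ hD]
  nlinarith [mul_nonneg (mul_nonneg (hpY j).le (sub_nonneg.2 h)) (sub_pos.2 hi).le]

lemma eij_le_pYj (hpX : ∀ i, 0 < pX i) (hpY : ∀ i, 0 < pY i) {i j : Fin m}
    (hi : pX i < pY i) (hj : pY j < pX j) (h : pY i ≤ pY j) :
    eij pX pY i j ≤ pY j := by
  have hD := D_pos hpX hpY hi hj
  rw [eij, div_le_iff₀ hD]
  nlinarith [mul_nonneg (mul_nonneg (hpX i).le (sub_nonneg.2 h)) (sub_pos.2 hj).le]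

/-- Dual feasibility inequality for a pair `(i, j)` with `pX i < pY i` and `pY j < pX j`. -/
lemma pair_key (hpX : ∀ i, 0 < pX i) (hpY : ∀ i, 0 < pY i) {M : ℝ} (hMpos : 0 < M)
    {i j : Fin m} (hi : pX i < pY i) (hj : pY j < pX j) (hM : eij pX pY i j ≤ M) :
    (1 / M - 1 / pY i) * (1 / pY j - 1 / pX j) ≤ (1 / pY j - 1 / M) * (1 / pX i - 1 / pY i) := by
  have hD := D_pos hpX hpY hi hj
  have key : pX i * pY i * (pX j - pY j) + pX j * pY j * (pY i - pX i)
      ≤ M * (pY i * pX j - pX i * pY j) := by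
    rw [eij, div_le_iff₀ hD] at hM; exact hM
  have hpXi := hpX i; have hpYi := hpY i; have hpXj := hpX j; have hpYj := hpY j
  have hident : (1 / pY j - 1 / M) * (1 / pX i - 1 / pY i)
        - (1 / M - 1 / pY i) * (1 / pY j - 1 / pX j)
      = (M * (pY i * pX j - pX i * pY j)
          - (pX i * pY i * (pX j - pY j) + pX j * pY j * (pY i - pX i)))
        / (M * (pX i * pY i * (pX j * pY j))) := by
    field_simp
    ring
  have hpos : (0:ℝ) < M * (pX i * pY i * (pX j * pY j)) := by positivity
  nlinarith [div_nonneg (sub_nonneg.2 key) hpos.le]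

/-- The key upper bound: any dual-feasible `M` bounds `∑ u` over `Uset`. -/
lemma sum_le_of_dual (hpX : ∀ i, 0 < pX i) (hpY : ∀ i, 0 < pY i) {M : ℝ} (hMpos : 0 < M)
    (hM1 : ∀ i, min (pX i) (pY i) ≤ M)
    (hM2 : ∀ i j, pX i < pY i → pY j < pX j → eij pX pY i j ≤ M) :
    ∀ u ∈ Uset pX pY, ∑ i, u i ≤ M := by
  classical
  set α : Fin m → ℝ := fun i => (1 / M - 1 / pY i) / (1 / pX i - 1 / pY i) with hα
  set A : Set ℝ := insert 0 (α '' {i | pX i < pY i}) with hA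
  have hAfin : A.Finite := (Set.toFinite _).image α |>.insert 0
  have hAbdd : BddAbove A := hAfin.bddAbove
  have hAne : A.Nonempty := ⟨0, Set.mem_insert 0 _⟩
  set t : ℝ := sSup A with htdef
  have ht0 : 0 ≤ t := le_csSup hAbdd (Set.mem_insert 0 _)
  have hs_pos : ∀ i : Fin m, pX i < pY i → 0 < 1 / pX i - 1 / pY i := by
    intro i hi
    have := one_div_lt_one_div_of_lt (hpX i) hi
    linarith
  have halpha_le_one : ∀ i : Fin m, pX i < pY i → α i ≤ 1 := by
    intro i hi
    have hsi := hs_pos i hi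
    rw [hα, div_le_one hsi]
    have hXM : pX i ≤ M := (min_eq_left hi.le) ▸ hM1 i
    have := one_div_le_one_div_of_le (hpX i) hXM
    linarith
  have ht1 : t ≤ 1 := by
    refine csSup_le hAne ?_
    rintro x (rfl | ⟨i, hi, rfl⟩)
    · norm_num
    · exact halpha_le_one i hi
  have hkey : ∀ i : Fin m, 1 / M ≤ t / pX i + (1 - t) / pY i := by
    intro i
    rcases lt_trichotomy (pX i) (pY i) with hi | hi | hi
    · have hsi := hs_pos i hi
      have hαt : α i ≤ t :=
        le_csSup hAbdd (Set.mem_insert_of_mem _ ⟨i, hi, rfl⟩)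
      have h1 : 1 / M - 1 / pY i ≤ t * (1 / pX i - 1 / pY i) := by
        rw [hα] at hαt
        exact (div_le_iff₀ hsi).1 hαt
      have h2 : t / pX i + (1 - t) / pY i = t * (1 / pX i - 1 / pY i) + 1 / pY i := by ring
      linarith
    · have hXM : pX i ≤ M := (min_eq_left hi.le) ▸ hM1 i
      have h1 : 1 / M ≤ 1 / pX i := one_div_le_one_div_of_le (hpX i) hXM
      have h2 : t / pX i + (1 - t) / pY i = 1 / pX i := by
        rw [← hi]; ring
      linarith
    · -- pY i < pX i : use the upper constraint t ≤ β i
      have hsj : 0 < 1 / pY i - 1 / pX i := by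
        have := one_div_lt_one_div_of_lt (hpY i) hi
        linarith
      have hYM : pY i ≤ M := (min_eq_right hi.le) ▸ hM1 i
      have hβ0 : 0 ≤ (1 / pY i - 1 / M) / (1 / pY i - 1 / pX i) := by
        apply div_nonneg _ hsj.le
        have := one_div_le_one_div_of_le (hpY i) hYM
        linarith
      have htβ : t ≤ (1 / pY i - 1 / M) / (1 / pY i - 1 / pX i) := by
        refine csSup_le hAne ?_
        rintro x (rfl | ⟨k, hk, rfl⟩)
        · exact hβ0
        · have hsk := hs_pos k hk
          rw [hα, div_le_div_iff₀ hsk hsj]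
          exact pair_key hpX hpY hMpos hk hi (hM2 k i hk hi)
      have h1 : t * (1 / pY i - 1 / pX i) ≤ 1 / pY i - 1 / M :=
        (le_div_iff₀ hsj).1 htβ
      have h2 : t / pX i + (1 - t) / pY i = 1 / pY i - t * (1 / pY i - 1 / pX i) := by ring
      linarith
  intro u hu
  obtain ⟨hu0, huX, huY⟩ := hu
  have h1 : (∑ i, u i) * (1 / M) ≤ t * (∑ i, u i / pX i) + (1 - t) * (∑ i, u i / pY i) := by
    rw [Finset.sum_mul, Finset.mul_sum, Finset.mul_sum, ← Finset.sum_add_distrib]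
    refine Finset.sum_le_sum fun i _ => ?_
    calc u i * (1 / M) ≤ u i * (t / pX i + (1 - t) / pY i) :=
          mul_le_mul_of_nonneg_left (hkey i) (hu0 i)
      _ = t * (u i / pX i) + (1 - t) * (u i / pY i) := by ring
  have h2 : t * (∑ i, u i / pX i) + (1 - t) * (∑ i, u i / pY i) ≤ 1 := by
    have hX := mul_le_mul_of_nonneg_left huX ht0
    have hY := mul_le_mul_of_nonneg_left huY (by linarith : (0:ℝ) ≤ 1 - t)
    linarith
  have h3 : (∑ i, u i) * (1 / M) ≤ 1 := h1.trans h2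
  have hM' : M ≠ 0 := hMpos.ne'
  calc ∑ i, u i = ((∑ i, u i) * (1 / M)) * M := by field_simp
    _ ≤ 1 * M := mul_le_mul_of_nonneg_right h3 hMpos.le
    _ = M := one_mul M

/-- Upper bound on `emax` from a dual certificate. -/
lemma emax_le (hpX : ∀ i, 0 < pX i) (hpY : ∀ i, 0 < pY i) {M : ℝ} (hMpos : 0 < M)
    (hM1 : ∀ i, min (pX i) (pY i) ≤ M)
    (hM2 : ∀ i j, pX i < pY i → pY j < pX j → eij pX pY i j ≤ M) :
    emax pX pY ≤ M := by
  refine Real.sSup_le ?_ hMpos.le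
  rintro x ⟨l, ⟨hl1, hl2⟩, rfl⟩
  set u : Fin m → ℝ := fun i => min (pX i * l.1 i) (pY i * l.2 i) with hu
  have humem : u ∈ Uset pX pY := by
    refine ⟨fun i => le_min (mul_nonneg (hpX i).le (hl1.1 i)) (mul_nonneg (hpY i).le (hl2.1 i)),
      ?_, ?_⟩
    · calc ∑ i, u i / pX i ≤ ∑ i, l.1 i := by
            refine Finset.sum_le_sum fun i _ => ?_
            rw [div_le_iff₀ (hpX i)]
            calc u i ≤ pX i * l.1 i := min_le_left _ _
              _ = l.1 i * pX i := mul_comm _ _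
        _ = 1 := hl1.2
    · calc ∑ i, u i / pY i ≤ ∑ i, l.2 i := by
            refine Finset.sum_le_sum fun i _ => ?_
            rw [div_le_iff₀ (hpY i)]
            calc u i ≤ pY i * l.2 i := min_le_right _ _
              _ = l.2 i * pY i := mul_comm _ _
        _ = 1 := hl2.2
  exact sum_le_of_dual hpX hpY hMpos hM1 hM2 u humem

lemma fobj_le_one (hpX : ∀ i, 0 < pX i) (hpY : ∀ i, 0 < pY i) (hpXsum : ∑ i, pX i = 1)
    {l : (Fin m → ℝ) × (Fin m → ℝ)} (hl : l ∈ Lam m ×ˢ Lam m) :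
    fobj pX pY l ≤ 1 := by
  obtain ⟨hl1, hl2⟩ := hl
  calc fobj pX pY l ≤ ∑ i, pX i * l.1 i :=
        Finset.sum_le_sum fun i _ => min_le_left _ _
    _ ≤ ∑ i, pX i * 1 := by
        refine Finset.sum_le_sum fun i _ => ?_
        refine mul_le_mul_of_nonneg_left ?_ (hpX i).le
        calc l.1 i ≤ ∑ j, l.1 j :=
              Finset.single_le_sum (fun j _ => hl1.1 j) (Finset.mem_univ i)
          _ = 1 := hl1.2
    _ = 1 := by simp [hpXsum]

lemma bddAbove_fobj (hpX : ∀ i, 0 < pX i) (hpY : ∀ i, 0 < pY i) (hpXsum : ∑ i, pX i = 1) :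
    BddAbove (fobj pX pY '' (Lam m ×ˢ Lam m)) := by
  refine ⟨1, ?_⟩
  rintro x ⟨l, hl, rfl⟩
  exact fobj_le_one hpX hpY hpXsum hl

lemma delta_mem_Lam (i : Fin m) : (fun k => if k = i then (1:ℝ) else 0) ∈ Lam m := by
  constructor
  · intro k; dsimp only; split_ifs <;> norm_num
  · rw [Finset.sum_ite_eq' Finset.univ i (fun _ => (1:ℝ))]
    simp

lemma sum_two_point {i j : Fin m} (hij : i ≠ j) (x y : ℝ) :
    ∑ k, (if k = i then x else if k = j then y else 0) = x + y := by
  have hptw : ∀ k, (if k = i then x else if k = j then y else 0)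
      = (if k = i then x else 0) + (if k = j then y else 0) := by
    intro k
    by_cases h1 : k = i
    · subst h1; simp [hij]
    · by_cases h2 : k = j <;> simp [h1, h2, Ne.symm hij]
  rw [Finset.sum_congr rfl fun k _ => hptw k, Finset.sum_add_distrib,
    Finset.sum_ite_eq' Finset.univ i (fun _ => x), Finset.sum_ite_eq' Finset.univ j (fun _ => y)]
  simp

lemma min_le_emax (hpX : ∀ i, 0 < pX i) (hpY : ∀ i, 0 < pY i) (hpXsum : ∑ i, pX i = 1)
    (i : Fin m) : min (pX i) (pY i) ≤ emax pX pY := by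
  set δ : Fin m → ℝ := fun k => if k = i then (1:ℝ) else 0 with hδ
  have hmem : (δ, δ) ∈ Lam m ×ˢ Lam m := ⟨delta_mem_Lam i, delta_mem_Lam i⟩
  have hval : fobj pX pY (δ, δ) = min (pX i) (pY i) := by
    unfold fobj
    have hptw : ∀ k, min (pX k * δ k) (pY k * δ k)
        = if k = i then min (pX i) (pY i) else 0 := by
      intro k
      by_cases h : k = i
      · subst h; simp [hδ]
      · simp [hδ, h]
    rw [Finset.sum_congr rfl fun k _ => hptw k,
      Finset.sum_ite_eq' Finset.univ i (fun _ => min (pX i) (pY i))]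
    simp
  exact hval ▸ le_csSup (bddAbove_fobj hpX hpY hpXsum) ⟨(δ, δ), hmem, rfl⟩

lemma e1_le_emax (hm : 0 < m) (hpX : ∀ i, 0 < pX i) (hpY : ∀ i, 0 < pY i)
    (hpXsum : ∑ i, pX i = 1) : e1 pX pY ≤ emax pX pY := by
  haveI : Nonempty (Fin m) := ⟨⟨0, hm⟩⟩
  exact ciSup_le fun i => min_le_emax hpX hpY hpXsum i

lemma min_le_e1 (i : Fin m) : min (pX i) (pY i) ≤ e1 pX pY :=
  le_ciSup (f := fun i => min (pX i) (pY i)) (Set.finite_range _).bddAbove i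

lemma e1_pos (hm : 0 < m) (hpX : ∀ i, 0 < pX i) (hpY : ∀ i, 0 < pY i) :
    0 < e1 pX pY := by
  haveI : Nonempty (Fin m) := ⟨⟨0, hm⟩⟩
  set i0 : Fin m := ⟨0, hm⟩
  calc (0:ℝ) < min (pX i0) (pY i0) := lt_min (hpX i0) (hpY i0)
    _ ≤ e1 pX pY := min_le_e1 i0

/-- Primal construction: for a pair in `S`, the value `e(i,j)` is attained by `f`. -/
lemma eij_le_emax (hpX : ∀ i, 0 < pX i) (hpY : ∀ i, 0 < pY i) (hpXsum : ∑ i, pX i = 1)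
    {i j : Fin m} (hS : (i, j) ∈ Sset pX pY) : eij pX pY i j ≤ emax pX pY := by
  obtain ⟨hXij, hYji, hXYi, hYXj⟩ := hS
  have hij : i ≠ j := fun h => absurd hXij (by rw [h]; exact lt_irrefl _)
  have hD : 0 < pY i * pX j - pX i * pY j := D_pos hpX hpY hXYi hYXj
  have hD' : (pY i * pX j - pX i * pY j) ≠ 0 := hD.ne'
  set D : ℝ := pY i * pX j - pX i * pY j with hDdef
  set a : ℝ := pY i * (pX j - pY j) / D with ha
  set a' : ℝ := pX i * (pX j - pY j) / D with ha'
  set b' : ℝ := pX j * (pY i - pX i) / D with hb'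
  have ha0 : 0 ≤ a := div_nonneg (mul_nonneg (hpY i).le (by linarith)) hD.le
  have ha'0 : 0 ≤ a' := div_nonneg (mul_nonneg (hpX i).le (by linarith)) hD.le
  have hb'0 : 0 ≤ b' := div_nonneg (mul_nonneg (hpX j).le (by linarith)) hD.le
  have ha1 : a ≤ 1 := by
    rw [ha, div_le_one hD]
    nlinarith [hpY j, hpY i]
  set lX : Fin m → ℝ := fun k => if k = i then a else if k = j then 1 - a else 0 with hlX
  set lY : Fin m → ℝ := fun k => if k = i then a' else if k = j then b' else 0 with hlY
  have hlXmem : lX ∈ Lam m := by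
    constructor
    · intro k; simp only [hlX]; split_ifs <;> linarith
    · rw [hlX, sum_two_point hij]; ring
  have hlYmem : lY ∈ Lam m := by
    constructor
    · intro k; simp only [hlY]; split_ifs <;> linarith
    · rw [hlY, sum_two_point hij, ha', hb']
      field_simp
      ring
  have hmin1 : pX i * a = pY i * a' := by rw [ha, ha']; ring
  have hmin2 : pX j * (1 - a) = pY j * b' := by
    rw [ha, hb']
    field_simp
    ring
  have hval : fobj pX pY (lX, lY) = eij pX pY i j := by
    unfold fobj
    have hptw : ∀ k, min (pX k * lX k) (pY k * lY k)
        = if k = i then pX i * a else if k = j then pX j * (1 - a) else 0 := by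
      intro k
      by_cases h1 : k = i
      · subst h1
        simp only [hlX, hlY, if_pos rfl, if_true]
        rw [← hmin1, min_self]
      · by_cases h2 : k = j
        · subst h2
          simp only [hlX, hlY, if_neg h1, if_pos rfl, if_true]
          rw [← hmin2, min_self]
        · simp [hlX, hlY, h1, h2]
    rw [Finset.sum_congr rfl fun k _ => hptw k, sum_two_point hij]
    rw [ha, eij, ← hDdef]
    field_simp
    ring
  exact hval ▸ le_csSup (bddAbove_fobj hpX hpY hpXsum) ⟨(lX, lY), ⟨hlXmem, hlYmem⟩, rfl⟩

end Auxiliary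

/-- The representation of `e_max`:
`e_max = max (max_i min(p^X_i, p^Y_i)) (max_{(i,j)∈S} e(i,j))`, and when `S = ∅`,
`e_max = max_i min(p^X_i, p^Y_i)`. -/
theorem emax_representation
    (m : ℕ) (hm : 2 ≤ m)
    (pX pY : Fin m → ℝ)
    (hpX : ∀ i, 0 < pX i) (hpY : ∀ i, 0 < pY i)
    (hpXsum : ∑ i, pX i = 1) (hpYsum : ∑ i, pY i = 1) :
    (Sset pX pY = ∅ → emax pX pY = e1 pX pY) ∧
      ((Sset pX pY).Nonempty → emax pX pY = max (e1 pX pY) (e2 pX pY)) := by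
  have hm0 : 0 < m := by omega
  haveI : Nonempty (Fin m) := ⟨⟨0, hm0⟩⟩
  have he1pos : 0 < e1 pX pY := e1_pos hm0 hpX hpY
  have he1le : e1 pX pY ≤ emax pX pY := e1_le_emax hm0 hpX hpY hpXsum
  have hM1e1 : ∀ i, min (pX i) (pY i) ≤ e1 pX pY :=
    fun i => min_le_e1 i
  -- for pairs outside S, eij is bounded by e1
  have houtS : ∀ i j : Fin m, pX i < pY i → pY j < pX j → (i, j) ∉ Sset pX pY →
      eij pX pY i j ≤ e1 pX pY := by
    intro i j hi hj hnS
    rcases le_or_gt (pX j) (pX i) with hc | hc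
    · calc eij pX pY i j ≤ pX i := eij_le_pXi hpX hpY hi hj hc
        _ = min (pX i) (pY i) := (min_eq_left hi.le).symm
        _ ≤ e1 pX pY := hM1e1 i
    · rcases le_or_gt (pY i) (pY j) with hc2 | hc2
      · calc eij pX pY i j ≤ pY j := eij_le_pYj hpX hpY hi hj hc2
          _ = min (pX j) (pY j) := (min_eq_right hj.le).symm
          _ ≤ e1 pX pY := hM1e1 j
      · exact absurd ⟨hc, hc2, hi, hj⟩ hnS
  constructor
  · -- Case S = ∅
    intro hSempty
    refine le_antisymm ?_ he1le
    refine emax_le hpX hpY he1pos hM1e1 ?_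
    intro i j hi hj
    refine houtS i j hi hj ?_
    rw [hSempty]
    exact Set.notMem_empty _
  · -- Case S nonempty
    intro _
    have hbddS : BddAbove ((fun ij : Fin m × Fin m => eij pX pY ij.1 ij.2) '' Sset pX pY) :=
      ((Set.toFinite (Sset pX pY)).image _).bddAbove
    have he2le : e2 pX pY ≤ emax pX pY := by
      refine Real.sSup_le ?_ (he1pos.le.trans he1le)
      rintro x ⟨ij, hij, rfl⟩
      exact eij_le_emax hpX hpY hpXsum hij
    refine le_antisymm ?_ (max_le he1le he2le)
    have hMpos : 0 < max (e1 pX pY) (e2 pX pY) := lt_max_of_lt_left he1pos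
    refine emax_le hpX hpY hMpos (fun i => (hM1e1 i).trans (le_max_left _ _)) ?_
    intro i j hi hj
    by_cases hS : (i, j) ∈ Sset pX pY
    · calc eij pX pY i j ≤ e2 pX pY := le_csSup hbddS ⟨(i, j), hS, rfl⟩
        _ ≤ max (e1 pX pY) (e2 pX pY) := le_max_right _ _
    · exact (houtS i j hi hj hS).trans (le_max_left _ _)

end
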